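/- For x, y > 0, the point (x,y) satisfies (x,y) ⪯_se W(x,y) (i.e., x ≤ x' and y ≥ y' where (x',y') = W(x,y)) if and only if x ≥ ψ(y) and y ≤ ψ(x), where ψ(u) = √L·(1/√u + √u) − (1+θ+u). -/

import Mathlib

noncomputable def Wmap (θ L : ℝ) (p : ℝ × ℝ) : ℝ × ℝ :=
  (L * ((1 + p.1) / (1 + θ + p.1 + p.2)) ^ 2,
   L * ((1 + p.2) / (1 + θ + p.1 + p.2)) ^ 2)

noncomputable def psiCurve (θ L u : ℝ) : ℝ :=
  Real.sqrt L * (1 / Real.sqrt u + Real.sqrt u) - (1 + θ + u)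

private lemma sqrt_form (L a : ℝ) (hL : 0 < L) (ha : 0 < a) :
    Real.sqrt L * (1 / Real.sqrt a + Real.sqrt a) = Real.sqrt L * (1 + a) / Real.sqrt a := by
  have hsa : 0 < Real.sqrt a := Real.sqrt_pos.2 ha
  have ha2 : Real.sqrt a ^ 2 = a := Real.sq_sqrt ha.le
  field_simp
  rw [ha2]

private lemma key (L a S : ℝ) (hL : 0 < L) (ha : 0 < a) (hS : 0 < S) :
    a ≤ L * ((1 + a) / S) ^ 2 ↔ S ≤ Real.sqrt L * (1 / Real.sqrt a + Real.sqrt a) := by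
  have hsa : 0 < Real.sqrt a := Real.sqrt_pos.2 ha
  have hsL : 0 < Real.sqrt L := Real.sqrt_pos.2 hL
  have ha2 : Real.sqrt a ^ 2 = a := Real.sq_sqrt ha.le
  have hL2 : Real.sqrt L ^ 2 = L := Real.sq_sqrt hL.le
  rw [sqrt_form L a hL ha, le_div_iff₀ hsa, div_pow, ← mul_div_assoc,
    le_div_iff₀ (by positivity : (0:ℝ) < S ^ 2)]
  constructor
  · intro h
    nlinarith [h, ha2, hL2, mul_pos hsL (by linarith : (0:ℝ) < 1 + a), mul_pos hS hsa]
  · intro h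
    nlinarith [h, ha2, hL2, mul_pos hsL (by linarith : (0:ℝ) < 1 + a), mul_pos hS hsa]

private lemma key' (L a S : ℝ) (hL : 0 < L) (ha : 0 < a) (hS : 0 < S) :
    L * ((1 + a) / S) ^ 2 ≤ a ↔ Real.sqrt L * (1 / Real.sqrt a + Real.sqrt a) ≤ S := by
  have hsa : 0 < Real.sqrt a := Real.sqrt_pos.2 ha
  have hsL : 0 < Real.sqrt L := Real.sqrt_pos.2 hL
  have ha2 : Real.sqrt a ^ 2 = a := Real.sq_sqrt ha.le
  have hL2 : Real.sqrt L ^ 2 = L := Real.sq_sqrt hL.le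
  rw [sqrt_form L a hL ha, div_le_iff₀ hsa, div_pow, ← mul_div_assoc,
    div_le_iff₀ (by positivity : (0:ℝ) < S ^ 2)]
  constructor
  · intro h
    nlinarith [h, ha2, hL2, mul_pos hsL (by linarith : (0:ℝ) < 1 + a), mul_pos hS hsa]
  · intro h
    nlinarith [h, ha2, hL2, mul_pos hsL (by linarith : (0:ℝ) < 1 + a), mul_pos hS hsa]

theorem se_below_W_iff_psi (θ L : ℝ) (hθ : 0 < θ) (hL : 0 < L)
    (x y : ℝ) (hx : 0 < x) (hy : 0 < y) :
    (x ≤ (Wmap θ L (x, y)).1 ∧ (Wmap θ L (x, y)).2 ≤ y) ↔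
      (psiCurve θ L y ≤ x ∧ y ≤ psiCurve θ L x) := by
  have hS : (0:ℝ) < 1 + θ + x + y := by linarith
  have h1 := key L x (1 + θ + x + y) hL hx hS
  have h2 := key' L y (1 + θ + x + y) hL hy hS
  simp only [Wmap, psiCurve]
  constructor
  · rintro ⟨ha, hb⟩
    exact ⟨by linarith [h2.1 hb], by linarith [h1.1 ha]⟩
  · rintro ⟨ha, hb⟩
    exact ⟨h1.2 (by linarith), h2.2 (by linarith)⟩
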